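/- The Fermat metric of a standard stationary scalar product with data $(\Lambda, \omega, g_0)$, namely $F(v) = \tfrac{1}{\Lambda}\omega(v) + \sqrt{\tfrac{1}{\Lambda^2}\omega(v)^2 + \tfrac{1}{\Lambda} g_0(v,v)}$, equals the Zermelo metric $Z(v) = \sqrt{\tfrac{1}{\alpha} h_0(v,v) + \tfrac{1}{\alpha^2} h_0(W,v)^2} - \tfrac{1}{\alpha} h_0(W,v)$ with navigation data determined by $\omega = -g_0(W, \cdot)$ and $h_0 = \tfrac{1}{\Lambda + \|\omega\|_0^2}\, g_0$, where $\alpha = 1 - h_0(W,W)$ and $\|\omega\|_0$ is the $g_0$-norm of $\omega$. -/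

import Mathlib

/-- The Fermat metric of a standard stationary scalar product with data
`(Λ, ω, g₀)` equals the Zermelo metric with navigation data `(h₀, W)` given by
`ω = -g₀(W,·)` and `h₀ = g₀ / (Λ + ‖ω‖₀²)`, where `‖ω‖₀² = g₀(W,W)` and
`α = 1 - h₀(W,W)`. -/
theorem fermat_eq_zermelo {V : Type*} [AddCommGroup V] [Module ℝ V]
    [FiniteDimensional ℝ V]
    (Λ : ℝ) (hΛ : 0 < Λ)
    (g0 : V →ₗ[ℝ] V →ₗ[ℝ] ℝ)
    (g0symm : ∀ u v : V, g0 u v = g0 v u)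
    (g0pos : ∀ v : V, v ≠ 0 → 0 < g0 v v)
    (ω : V →ₗ[ℝ] ℝ) (W : V)
    (hω : ∀ v : V, ω v = -(g0 W v))
    (h0 : V → V → ℝ)
    (hh0 : ∀ u v : V, h0 u v = (1 / (Λ + g0 W W)) * g0 u v)
    (α : ℝ) (hα : α = 1 - h0 W W) :
    ∀ v : V,
      (1 / Λ) * ω v + Real.sqrt ((1 / Λ ^ 2) * (ω v) ^ 2 + (1 / Λ) * g0 v v)
        = Real.sqrt ((1 / α) * h0 v v + (1 / α ^ 2) * (h0 W v) ^ 2)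
            - (1 / α) * h0 W v := by
  have ha : 0 ≤ g0 W W := by
    rcases eq_or_ne W 0 with h | h
    · simp [h]
    · exact (g0pos W h).le
  have hs : (0:ℝ) < Λ + g0 W W := by linarith
  have hsne : Λ + g0 W W ≠ 0 := ne_of_gt hs
  have hΛne : Λ ≠ 0 := ne_of_gt hΛ
  have hαval : α = Λ / (Λ + g0 W W) := by
    rw [hα, hh0]; field_simp; ring
  intro v
  have harg : (1 / α) * h0 v v + (1 / α ^ 2) * (h0 W v) ^ 2
      = (1 / Λ ^ 2) * (ω v) ^ 2 + (1 / Λ) * g0 v v := by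
    rw [hαval, hh0, hh0, hω]; field_simp; ring
  have hlin : (1 / α) * h0 W v = -((1 / Λ) * ω v) := by
    rw [hαval, hh0, hω]; field_simp
  rw [harg, hlin]; ring
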